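/- Let θ be an involutive isometry preserving a root system Φ with Φ^im = {α : θ(α) = α}, and let Φ^{im,c} ⊆ Φ^im be a sub-root system such that whenever α, β ∈ Φ^im with α + β ∈ Φ, the root α + β lies in Φ^{im,c} if and only if either both or neither of α, β lie in Φ^{im,c}. Let ρ^{im,c} be the Weyl vector of a positive system of Φ^{im,c}, choose a positive system Φ^{im,+} of Φ^im for which ρ^{im,c} is dominant, and let B = {α_1,…,α_m} be the simple roots of Φ^{im,+} orthogonal to ρ^{im,c}. Then each α_i lies in Φ^im \ Φ^{im,c}, the α_i are pairwise orthogonal, and B is superorthogonal in Φ^im (the only roots of Φ^im in the span of B are ±α_1,…,±α_m). -/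

import Mathlib

open RealInnerProductSpace

variable {V : Type*} [NormedAddCommGroup V] [InnerProductSpace ℝ V] [FiniteDimensional ℝ V]

/-- The reflection in the hyperplane orthogonal to `α`. -/
noncomputable def sRefl (α : V) : V ≃ₗᵢ[ℝ] V := Submodule.reflection (ℝ ∙ α)ᗮ

/-- A reduced crystallographic root system in a real inner product space. -/
structure IsRootSystem (Ψ : Set V) : Prop where
  finite : Ψ.Finite
  ne_zero : ∀ α ∈ Ψ, α ≠ 0
  neg_mem : ∀ α ∈ Ψ, -α ∈ Ψ
  reduced : ∀ α ∈ Ψ, ∀ t : ℝ, t • α ∈ Ψ → t = 1 ∨ t = -1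
  refl_mem : ∀ α ∈ Ψ, ∀ β ∈ Ψ, sRefl α β ∈ Ψ
  crystallographic : ∀ α ∈ Ψ, ∀ β ∈ Ψ, ∃ n : ℤ, 2 * ⟪β, α⟫ / ⟪α, α⟫ = (n : ℝ)

/-- `P` is a system of positive roots for `Ψ`. -/
structure IsPositiveSystem (Ψ P : Set V) : Prop where
  subset : P ⊆ Ψ
  mem_or_neg_mem : ∀ α ∈ Ψ, α ∈ P ∨ -α ∈ P
  not_neg_mem : ∀ α ∈ P, -α ∉ P
  add_mem : ∀ α ∈ P, ∀ β ∈ P, α + β ∈ Ψ → α + β ∈ P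

/-- `Pi` is a sub-root system of `Ψ`: closed under negation and under addition of roots. -/
def IsSubRootSystem (Ψ Pi : Set V) : Prop :=
  Pi ⊆ Ψ ∧ (∀ α ∈ Pi, -α ∈ Pi) ∧ ∀ α ∈ Pi, ∀ β ∈ Pi, α + β ∈ Ψ → α + β ∈ Pi

/-- `Δ` is a base (system of simple roots) of `Ψ`. -/
structure IsBase (Ψ : Set V) (Δ : Finset V) : Prop where
  subset : ↑Δ ⊆ Ψ
  indep : LinearIndependent ℝ (fun α : Δ => (α : V))
  decomp : ∀ β ∈ Ψ, ∃ c : V → ℤ, β = ∑ α ∈ Δ, (c α : ℝ) • α ∧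
    ((∀ α ∈ Δ, 0 ≤ c α) ∨ (∀ α ∈ Δ, c α ≤ 0))

/-- The Weyl group of `Ψ`: the subgroup of linear isometries generated by root reflections. -/
noncomputable def weylGroup (Ψ : Set V) : Subgroup (V ≃ₗᵢ[ℝ] V) :=
  Subgroup.closure {g | ∃ α ∈ Ψ, g = sRefl α}

/-- `w` commutes with `θ` as a map on `V`. -/
def commutesWith (θ w : V ≃ₗᵢ[ℝ] V) : Prop := ∀ x : V, θ (w x) = w (θ x)


section Auxiliary

omit [FiniteDimensional ℝ V] in
lemma sRefl_apply {α : V} (hα : α ≠ 0) (x : V) :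
    sRefl α x = x - (2 * ⟪x, α⟫ / ⟪α, α⟫) • α := by
  have haa : ⟪α, α⟫ ≠ 0 := fun h => hα (inner_self_eq_zero.mp h)
  set c : ℝ := ⟪x, α⟫ / ⟪α, α⟫ with hc
  have hy : x - c • α ∈ (ℝ ∙ α)ᗮ := by
    rw [Submodule.mem_orthogonal_singleton_iff_inner_left,
      inner_sub_left, real_inner_smul_left, hc]
    field_simp
    ring
  have hαmem : α ∈ ((ℝ ∙ α)ᗮ)ᗮ :=
    Submodule.le_orthogonal_orthogonal _ (Submodule.mem_span_singleton_self α)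
  have hrx : sRefl α x = sRefl α ((x - c • α) + c • α) := by rw [sub_add_cancel]
  rw [hrx]
  show Submodule.reflection (ℝ ∙ α)ᗮ _ = _
  rw [map_add, map_smul, Submodule.reflection_mem_subspace_eq_self hy,
    Submodule.reflection_mem_subspace_orthogonalComplement_eq_neg hαmem]
  have h2 : 2 * ⟪x, α⟫ / ⟪α, α⟫ = 2 * c := by rw [hc]; ring
  rw [smul_neg, h2]
  module

omit [FiniteDimensional ℝ V] in
lemma sum_mem_of_inner_neg {Φ : Set V} (hΦ : IsRootSystem Φ) {α β : V}
    (hα : α ∈ Φ) (hβ : β ∈ Φ) (hneg : ⟪α, β⟫ < 0) (hne : α + β ≠ 0) : α + β ∈ Φ := by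
  have hα0 : α ≠ 0 := hΦ.ne_zero α hα
  have hβ0 : β ≠ 0 := hΦ.ne_zero β hβ
  have haa : (0:ℝ) < ⟪α, α⟫ :=
    lt_of_le_of_ne real_inner_self_nonneg (fun h => hα0 (inner_self_eq_zero.mp h.symm))
  have hbb : (0:ℝ) < ⟪β, β⟫ :=
    lt_of_le_of_ne real_inner_self_nonneg (fun h => hβ0 (inner_self_eq_zero.mp h.symm))
  obtain ⟨n, hn⟩ := hΦ.crystallographic α hα β hβ
  obtain ⟨m, hm⟩ := hΦ.crystallographic β hβ α hα
  have hba : ⟪β, α⟫ = ⟪α, β⟫ := real_inner_comm α β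
  have hn' : 2 * ⟪α, β⟫ = (n:ℝ) * ⟪α, α⟫ := by
    field_simp at hn; rw [hba] at hn; linarith
  have hm' : 2 * ⟪α, β⟫ = (m:ℝ) * ⟪β, β⟫ := by
    field_simp at hm; linarith
  have hnneg : n ≤ -1 := by
    by_contra h
    push_neg at h
    have h0 : (0:ℤ) ≤ n := by omega
    have : (0:ℝ) ≤ (n:ℝ) * ⟪α, α⟫ := mul_nonneg (by exact_mod_cast h0) haa.le
    linarith
  have hmneg : m ≤ -1 := by
    by_contra h
    push_neg at h
    have h0 : (0:ℤ) ≤ m := by omega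
    have : (0:ℝ) ≤ (m:ℝ) * ⟪β, β⟫ := mul_nonneg (by exact_mod_cast h0) hbb.le
    linarith
  rcases eq_or_ne m (-1) with hm1 | hm1
  · have := hΦ.refl_mem β hβ α hα
    rwa [sRefl_apply hβ0, hm, hm1, Int.cast_neg, Int.cast_one, neg_smul, one_smul,
      sub_neg_eq_add] at this
  rcases eq_or_ne n (-1) with hn1 | hn1
  · have := hΦ.refl_mem α hα β hβ
    rw [sRefl_apply hα0, hn, hn1, Int.cast_neg, Int.cast_one, neg_smul, one_smul,
      sub_neg_eq_add] at this
    rwa [add_comm]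
  exfalso
  have hcs : ⟪α, β⟫ * ⟪α, β⟫ ≤ ⟪α, α⟫ * ⟪β, β⟫ := real_inner_mul_inner_self_le α β
  have key : ((n:ℝ) * ⟪α, α⟫) * ((m:ℝ) * ⟪β, β⟫) = (2 * ⟪α, β⟫) * (2 * ⟪α, β⟫) := by
    rw [← hn', ← hm']
  have hnm : (n:ℝ) * (m:ℝ) ≤ 4 := by nlinarith [mul_pos haa hbb]
  have hnm' : (n:ℤ) * m ≤ 4 := by exact_mod_cast hnm
  have hn2' : n ≤ -2 := by omega
  have hm2' : m ≤ -2 := by omega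
  have hn2 : n = -2 ∧ m = -2 := by constructor <;> nlinarith
  have hab : ⟪α, β⟫ = -⟪α, α⟫ := by rw [hn2.1] at hn'; push_cast at hn'; linarith
  have hab' : ⟪α, β⟫ = -⟪β, β⟫ := by rw [hn2.2] at hm'; push_cast at hm'; linarith
  apply hne
  have : ⟪α + β, α + β⟫ = 0 := by
    rw [inner_add_add_self, ← hba]; linarith
  exact inner_self_eq_zero.mp this

omit [FiniteDimensional ℝ V] in
lemma chain_lemma {Φ : Set V} (hΦ : IsRootSystem Φ) (θ : V ≃ₗᵢ[ℝ] V)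
    {Φim : Set V} (him : Φim = {α ∈ Φ | θ α = α})
    {Φc : Set V} (hΦcsub : IsSubRootSystem Φim Φc)
    {Pc : Finset V} (hPc : IsPositiveSystem Φc ↑Pc)
    {β γ : V} (hβ : β ∈ Pc) (hγ : γ ∈ Pc) (hneg : ⟪γ, β⟫ < 0) :
    sRefl β γ ∈ Pc := by
  have hβc : β ∈ Φc := hPc.subset (Finset.mem_coe.mpr hβ)
  have hγc : γ ∈ Φc := hPc.subset (Finset.mem_coe.mpr hγ)
  have hβim : β ∈ Φim := hΦcsub.1 hβc
  have hγim : γ ∈ Φim := hΦcsub.1 hγc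
  have hβΦ : β ∈ Φ := by rw [him] at hβim; exact hβim.1
  have hγΦ : γ ∈ Φ := by rw [him] at hγim; exact hγim.1
  have hθβ : θ β = β := by rw [him] at hβim; exact hβim.2
  have hθγ : θ γ = γ := by rw [him] at hγim; exact hγim.2
  have hβ0 : β ≠ 0 := hΦ.ne_zero β hβΦ
  have hγ0 : γ ≠ 0 := hΦ.ne_zero γ hγΦ
  have hbb : (0:ℝ) < ⟪β, β⟫ :=
    lt_of_le_of_ne real_inner_self_nonneg (fun h => hβ0 (inner_self_eq_zero.mp h.symm))
  have hgg : (0:ℝ) < ⟪γ, γ⟫ :=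
    lt_of_le_of_ne real_inner_self_nonneg (fun h => hγ0 (inner_self_eq_zero.mp h.symm))
  have step : ∀ δ, δ ∈ Pc → δ + β ∈ Φ → δ + β ∈ Pc := by
    intro δ hδ hδβΦ
    have hδc : δ ∈ Φc := hPc.subset (Finset.mem_coe.mpr hδ)
    have hδim : δ ∈ Φim := hΦcsub.1 hδc
    have hθδ : θ δ = δ := by rw [him] at hδim; exact hδim.2
    have him' : δ + β ∈ Φim := by
      rw [him]; exact ⟨hδβΦ, by rw [map_add, hθδ, hθβ]⟩
    have hc : δ + β ∈ Φc := hΦcsub.2.2 δ hδc β hβc him'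
    exact Finset.mem_coe.mp (hPc.add_mem δ (Finset.mem_coe.mpr hδ) β (Finset.mem_coe.mpr hβ) hc)
  obtain ⟨n, hn⟩ := hΦ.crystallographic β hβΦ γ hγΦ
  obtain ⟨m, hm⟩ := hΦ.crystallographic γ hγΦ β hβΦ
  have hbg : ⟪β, γ⟫ = ⟪γ, β⟫ := real_inner_comm γ β
  have hn' : 2 * ⟪γ, β⟫ = (n:ℝ) * ⟪β, β⟫ := by field_simp at hn; linarith
  have hm' : 2 * ⟪γ, β⟫ = (m:ℝ) * ⟪γ, γ⟫ := by field_simp at hm; linarith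
  have hnneg : n ≤ -1 := by
    by_contra h
    push_neg at h
    have h0 : (0:ℤ) ≤ n := by omega
    have : (0:ℝ) ≤ (n:ℝ) * ⟪β, β⟫ := mul_nonneg (by exact_mod_cast h0) hbb.le
    linarith
  have hmneg : m ≤ -1 := by
    by_contra h
    push_neg at h
    have h0 : (0:ℤ) ≤ m := by omega
    have : (0:ℝ) ≤ (m:ℝ) * ⟪γ, γ⟫ := mul_nonneg (by exact_mod_cast h0) hgg.le
    linarith
  have hcs : ⟪γ, β⟫ * ⟪γ, β⟫ ≤ ⟪γ, γ⟫ * ⟪β, β⟫ := real_inner_mul_inner_self_le γ β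
  have key : ((n:ℝ) * ⟪β, β⟫) * ((m:ℝ) * ⟪γ, γ⟫) = (2 * ⟪γ, β⟫) * (2 * ⟪γ, β⟫) := by
    rw [← hn', ← hm']
  have hnm : (n:ℝ) * (m:ℝ) ≤ 4 := by nlinarith [mul_pos hbb hgg]
  have hnm' : (n:ℤ) * m ≤ 4 := by exact_mod_cast hnm
  have hγβ0 : γ + β ≠ 0 := by
    intro h
    have hd := eq_neg_of_add_eq_zero_left h
    exact hPc.not_neg_mem β (Finset.mem_coe.mpr hβ) (by rw [← hd]; exact Finset.mem_coe.mpr hγ)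
  have hγβΦ : γ + β ∈ Φ := sum_mem_of_inner_neg hΦ hγΦ hβΦ hneg hγβ0
  have hγβPc : γ + β ∈ Pc := step γ hγ hγβΦ
  rcases eq_or_ne n (-1) with h1 | h1
  · have hr : sRefl β γ = γ + β := by
      rw [sRefl_apply hβ0 γ, hn, h1]; push_cast; module
    rw [hr]; exact hγβPc
  rcases eq_or_ne n (-2) with h2 | h2
  · have hr : sRefl β γ = (γ + β) + β := by
      rw [sRefl_apply hβ0 γ, hn, h2]; push_cast; module
    rw [hr]
    refine step (γ + β) hγβPc ?_
    rw [← hr]; exact hΦ.refl_mem β hβΦ γ hγΦ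
  rcases eq_or_ne n (-3) with h3 | h3
  · have ha : ⟪γ, β⟫ = -(3/2) * ⟪β, β⟫ := by rw [h3] at hn'; push_cast at hn'; linarith
    have h2neg : ⟪γ + β, β⟫ < 0 := by
      rw [inner_add_left]; nlinarith
    have h2ne : (γ + β) + β ≠ 0 := by
      intro h
      have hβeq : (-2⁻¹ : ℝ) • γ = β := by
        rw [add_assoc] at h
        rw [eq_neg_of_add_eq_zero_left h]; module
      rcases hΦ.reduced γ hγΦ (-2⁻¹) (by rw [hβeq]; exact hβΦ) with h' | h' <;> norm_num at h'
    have h2Φ : (γ + β) + β ∈ Φ := sum_mem_of_inner_neg hΦ hγβΦ hβΦ h2neg h2ne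
    have h2Pc : (γ + β) + β ∈ Pc := step (γ + β) hγβPc h2Φ
    have hr : sRefl β γ = ((γ + β) + β) + β := by
      rw [sRefl_apply hβ0 γ, hn, h3]; push_cast; module
    rw [hr]
    refine step ((γ + β) + β) h2Pc ?_
    rw [← hr]; exact hΦ.refl_mem β hβΦ γ hγΦ
  exfalso
  have h4 : n ≤ -4 := by omega
  have hge : 4 ≤ (n:ℤ) * m := by nlinarith
  have hn4 : n = -4 ∧ m = -1 := by constructor <;> nlinarith
  have ha : ⟪γ, β⟫ = -2 * ⟪β, β⟫ := by rw [hn4.1] at hn'; push_cast at hn'; linarith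
  have hgg4 : ⟪γ, γ⟫ = 4 * ⟪β, β⟫ := by rw [hn4.2] at hm'; push_cast at hm'; linarith
  have hz : ⟪γ + (2:ℝ) • β, γ + (2:ℝ) • β⟫ = 0 := by
    rw [inner_add_add_self, real_inner_smul_left, real_inner_smul_right,
      real_inner_smul_left, real_inner_smul_right]
    rw [hbg] at *
    nlinarith
  have hz' : γ + (2:ℝ) • β = 0 := inner_self_eq_zero.mp hz
  have hβeq : (-2⁻¹ : ℝ) • γ = β := by
    rw [eq_neg_of_add_eq_zero_left hz']; module
  rcases hΦ.reduced γ hγΦ (-2⁻¹) (by rw [hβeq]; exact hβΦ) with h' | h' <;> norm_num at h'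

lemma rho_pos {Φ : Set V} (hΦ : IsRootSystem Φ) (θ : V ≃ₗᵢ[ℝ] V)
    {Φim : Set V} (him : Φim = {α ∈ Φ | θ α = α})
    {Φc : Set V} (hΦcsub : IsSubRootSystem Φim Φc)
    {Pc : Finset V} (hPc : IsPositiveSystem Φc ↑Pc)
    {ρc : V} (hρc : ρc = (2⁻¹ : ℝ) • ∑ β ∈ Pc, β)
    {β : V} (hβ : β ∈ Pc) : 0 < ⟪β, ρc⟫ := by
  classical
  have hβc : β ∈ Φc := hPc.subset (Finset.mem_coe.mpr hβ)
  have hβΦ : β ∈ Φ := by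
    have := hΦcsub.1 hβc; rw [him] at this; exact this.1
  have hβ0 : β ≠ 0 := hΦ.ne_zero β hβΦ
  have hbb : (0:ℝ) < ⟪β, β⟫ :=
    lt_of_le_of_ne real_inner_self_nonneg (fun h => hβ0 (inner_self_eq_zero.mp h.symm))
  have hsum : ⟪β, ρc⟫ = 2⁻¹ * ∑ γ ∈ Pc, ⟪β, γ⟫ := by
    rw [hρc, real_inner_smul_right, inner_sum]
  rw [hsum]
  have hflip : ∀ x : V, ⟪β, sRefl β x⟫ = -⟪β, x⟫ := by
    intro x
    rw [sRefl_apply hβ0 x, inner_sub_right, real_inner_smul_right,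
      real_inner_comm x β]
    field_simp
    ring
  set f : V → ℝ := fun γ => ⟪β, γ⟫ with hf
  set N : Finset V := Pc.filter (fun γ => ⟪β, γ⟫ < 0) with hN
  set M : Finset V := N.image (fun γ => sRefl β γ) with hM
  have hMPc : M ⊆ Pc := by
    intro δ hδ
    rw [hM, Finset.mem_image] at hδ
    obtain ⟨γ, hγN, rfl⟩ := hδ
    rw [hN, Finset.mem_filter] at hγN
    exact chain_lemma hΦ θ him hΦcsub hPc hβ hγN.1
      (by rw [real_inner_comm]; exact hγN.2)
  have hMpos : ∀ δ ∈ M, 0 < f δ := by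
    intro δ hδ
    rw [hM, Finset.mem_image] at hδ
    obtain ⟨γ, hγN, rfl⟩ := hδ
    rw [hN, Finset.mem_filter] at hγN
    rw [hf]; simp only
    rw [hflip]
    linarith [hγN.2]
  have hNsub : N ⊆ Pc \ M := by
    intro γ hγ
    rw [Finset.mem_sdiff]
    rw [hN, Finset.mem_filter] at hγ
    exact ⟨hγ.1, fun hγM => absurd (hMpos γ hγM) (by simp only [hf]; linarith [hγ.2])⟩
  have hMsum : ∑ δ ∈ M, f δ = - ∑ γ ∈ N, f γ := by
    rw [hM, Finset.sum_image (fun x _ y _ h => (sRefl β).injective h)]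
    rw [← Finset.sum_neg_distrib]
    exact Finset.sum_congr rfl (fun γ _ => hflip γ)
  have split1 : ∑ γ ∈ Pc, f γ = ∑ γ ∈ Pc \ M, f γ + ∑ δ ∈ M, f δ :=
    (Finset.sum_sdiff hMPc).symm
  have split2 : ∑ γ ∈ Pc \ M, f γ = ∑ γ ∈ (Pc \ M) \ N, f γ + ∑ γ ∈ N, f γ :=
    (Finset.sum_sdiff hNsub).symm
  have htot : ∑ γ ∈ Pc, f γ = ∑ γ ∈ (Pc \ M) \ N, f γ := by
    rw [split1, split2, hMsum]; ring
  have hβmem : β ∈ (Pc \ M) \ N := by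
    rw [Finset.mem_sdiff, Finset.mem_sdiff]
    refine ⟨⟨hβ, ?_⟩, ?_⟩
    · intro hβM
      rw [hM, Finset.mem_image] at hβM
      obtain ⟨γ, hγN, hγeq⟩ := hβM
      rw [hN, Finset.mem_filter] at hγN
      have hγβ : γ = sRefl β β := by
        have := congrArg (sRefl β) hγeq
        rwa [show sRefl β (sRefl β γ) = γ from Submodule.reflection_reflection _ γ] at this
      have hrb : sRefl β β = -β := by
        rw [sRefl_apply hβ0 β]
        have h2 : 2 * ⟪β, β⟫ / ⟪β, β⟫ = 2 := by field_simp
        rw [h2]; module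
      rw [hrb] at hγβ
      exact hPc.not_neg_mem β (Finset.mem_coe.mpr hβ)
        (Finset.mem_coe.mpr (hγβ ▸ hγN.1))
    · rw [hN, Finset.mem_filter]
      push_neg
      intro _
      linarith
  have hnonneg : ∀ γ ∈ (Pc \ M) \ N, 0 ≤ f γ := by
    intro γ hγ
    rw [Finset.mem_sdiff] at hγ
    have hnl : ¬ (⟪β, γ⟫ < 0) := by
      intro hlt
      exact hγ.2 (by rw [hN, Finset.mem_filter]; exact ⟨(Finset.mem_sdiff.mp hγ.1).1, hlt⟩)
    simpa [hf] using le_of_not_gt hnl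
  have hle : f β ≤ ∑ γ ∈ (Pc \ M) \ N, f γ := Finset.single_le_sum hnonneg hβmem
  have hfβ : 0 < f β := by simpa [hf] using hbb
  rw [htot]
  have hpos : 0 < ∑ γ ∈ (Pc \ M) \ N, f γ := lt_of_lt_of_le hfβ hle
  linarith

end Auxiliary

/-- The simple roots of a suitable positive system of `Φ^im` that are orthogonal to
`ρ^{im,c}` are noncompact, pairwise orthogonal, and superorthogonal in `Φ^im`. -/
theorem stmt15 (Φ : Set V) (hΦ : IsRootSystem Φ) (θ : V ≃ₗᵢ[ℝ] V)
    (hinv : ∀ x, θ (θ x) = x) (hΦθ : ⇑θ '' Φ = Φ)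
    (Φim : Set V) (him : Φim = {α ∈ Φ | θ α = α})
    (Φc : Set V) (hΦcsub : IsSubRootSystem Φim Φc)
    (hgrade : ∀ α ∈ Φim, ∀ β ∈ Φim, α + β ∈ Φ → (α + β ∈ Φc ↔ (α ∈ Φc ↔ β ∈ Φc)))
    (Pc : Finset V) (hPc : IsPositiveSystem Φc ↑Pc)
    (ρc : V) (hρc : ρc = (2⁻¹ : ℝ) • ∑ β ∈ Pc, β)
    (Pim : Finset V) (hPim : IsPositiveSystem Φim ↑Pim)
    (hdom : ∀ α ∈ Pim, 0 ≤ ⟪α, ρc⟫)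
    (B : Set V)
    (hB : B = {α : V | α ∈ Pim ∧ (¬ ∃ β ∈ Pim, ∃ γ ∈ Pim, α = β + γ) ∧ ⟪α, ρc⟫ = 0}) :
    (∀ α ∈ B, α ∈ Φim ∧ α ∉ Φc) ∧
    (∀ α ∈ B, ∀ β ∈ B, α ≠ β → ⟪α, β⟫ = 0) ∧
    (∀ γ ∈ Φim, γ ∈ Submodule.span ℝ B → γ ∈ B ∨ -γ ∈ B) := by
  classical
  have hρne : ∀ δ ∈ Φc, ⟪δ, ρc⟫ ≠ 0 := by
    intro δ hδ h0
    rcases hPc.mem_or_neg_mem δ hδ with hp | hp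
    · have hpos := rho_pos hΦ θ him hΦcsub hPc hρc (Finset.mem_coe.mp hp)
      linarith
    · have hpos := rho_pos hΦ θ him hΦcsub hPc hρc (Finset.mem_coe.mp hp)
      rw [inner_neg_left] at hpos
      linarith
  have memB : ∀ α ∈ B, α ∈ Pim ∧ (¬ ∃ β ∈ Pim, ∃ γ ∈ Pim, α = β + γ) ∧ ⟪α, ρc⟫ = 0 := by
    intro α hα; rwa [hB] at hα
  have part1 : ∀ α ∈ B, α ∈ Φim ∧ α ∉ Φc := by
    intro α hα
    obtain ⟨hαP, _, hαρ⟩ := memB α hα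
    exact ⟨hPim.subset (Finset.mem_coe.mpr hαP), fun hc => hρne α hc hαρ⟩
  have imfacts : ∀ α ∈ Φim, α ∈ Φ ∧ θ α = α := by
    intro α hα; rwa [him] at hα
  refine ⟨part1, ?_, ?_⟩
  · intro α hα β hβ hne
    by_contra hab
    obtain ⟨hαP, hαind, hαρ⟩ := memB α hα
    obtain ⟨hβP, hβind, hβρ⟩ := memB β hβ
    have hαim := (part1 α hα).1
    have hβim := (part1 β hβ).1
    obtain ⟨hαΦ, hθα⟩ := imfacts α hαim
    obtain ⟨hβΦ, hθβ⟩ := imfacts β hβim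
    rcases lt_or_gt_of_ne hab with hlt | hgt
    · have hne0 : α + β ≠ 0 := by
        intro h
        have hd := eq_neg_of_add_eq_zero_left h
        exact hPim.not_neg_mem β (Finset.mem_coe.mpr hβP)
          (by rw [← hd]; exact Finset.mem_coe.mpr hαP)
      have hsumΦ := sum_mem_of_inner_neg hΦ hαΦ hβΦ hlt hne0
      have hsumc : α + β ∈ Φc :=
        (hgrade α hαim β hβim hsumΦ).mpr (iff_of_false (part1 α hα).2 (part1 β hβ).2)
      exact hρne _ hsumc (by rw [inner_add_left, hαρ, hβρ]; ring)
    · have hmb : -β ∈ Φ := hΦ.neg_mem β hβΦ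
      have hmm : ⟪α, -β⟫ < 0 := by rw [inner_neg_right]; linarith
      have hne0 : α + -β ≠ 0 := by
        intro h
        have hd := eq_neg_of_add_eq_zero_left h
        rw [neg_neg] at hd
        exact hne hd
      have hsub : α - β ∈ Φ := by
        have := sum_mem_of_inner_neg hΦ hαΦ hmb hmm hne0
        rwa [← sub_eq_add_neg] at this
      have hsubim : α - β ∈ Φim := by
        rw [him]; exact ⟨hsub, by rw [map_sub, hθα, hθβ]⟩
      rcases hPim.mem_or_neg_mem _ hsubim with hp | hp
      · exact hαind ⟨α - β, Finset.mem_coe.mp hp, β, hβP, by abel⟩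
      · exact hβind ⟨-(α - β), Finset.mem_coe.mp hp, α, hαP, by abel⟩
  · intro γ hγim hγspan
    obtain ⟨hγΦ, hθγ⟩ := imfacts γ hγim
    obtain ⟨c, hcsupp, hcsum⟩ := Submodule.mem_span_set.mp hγspan
    have hBρ : ∀ b ∈ B, ⟪b, ρc⟫ = 0 := fun b hb => (memB b hb).2.2
    have hγρ : ⟪γ, ρc⟫ = 0 := by
      rw [← hcsum, Finsupp.sum, sum_inner]
      apply Finset.sum_eq_zero
      intro b hb
      rw [real_inner_smul_left, hBρ b (hcsupp hb), mul_zero]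
    have hγnc : γ ∉ Φc := fun hc => hρne γ hc hγρ
    have hγ0 : γ ≠ 0 := hΦ.ne_zero γ hγΦ
    have hex : ∃ b ∈ B, ⟪γ, b⟫ ≠ 0 := by
      by_contra h
      push_neg at h
      apply hγ0
      have hz : ⟪γ, γ⟫ = 0 := by
        nth_rewrite 1 [← hcsum]
        rw [Finsupp.sum, sum_inner]
        apply Finset.sum_eq_zero
        intro b hb
        rw [real_inner_smul_left, ← real_inner_comm b γ, h b (hcsupp hb), mul_zero]
      exact inner_self_eq_zero.mp hz
    obtain ⟨b, hbB, hγb⟩ := hex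
    obtain ⟨hbP, _, hbρ⟩ := memB b hbB
    have hbim := (part1 b hbB).1
    have hbnc := (part1 b hbB).2
    obtain ⟨hbΦ, hθb⟩ := imfacts b hbim
    rcases lt_or_gt_of_ne hγb with hlt | hgt
    · by_cases hgb : γ = -b
      · right; rw [hgb, neg_neg]; exact hbB
      · exfalso
        have hne0 : γ + b ≠ 0 := fun h => hgb (eq_neg_of_add_eq_zero_left h)
        have hsumΦ := sum_mem_of_inner_neg hΦ hγΦ hbΦ hlt hne0
        have hsumc : γ + b ∈ Φc :=
          (hgrade γ hγim b hbim hsumΦ).mpr (iff_of_false hγnc hbnc)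
        exact hρne _ hsumc (by rw [inner_add_left, hγρ, hbρ]; ring)
    · by_cases hgb : γ = b
      · left; rw [hgb]; exact hbB
      · exfalso
        have hmb : -b ∈ Φ := hΦ.neg_mem b hbΦ
        have hmm : ⟪γ, -b⟫ < 0 := by rw [inner_neg_right]; linarith
        have hne0 : γ + -b ≠ 0 := by
          intro h
          have hd := eq_neg_of_add_eq_zero_left h
          rw [neg_neg] at hd
          exact hgb hd
        have hsub : γ - b ∈ Φ := by
          have := sum_mem_of_inner_neg hΦ hγΦ hmb hmm hne0
          rwa [← sub_eq_add_neg] at this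
        have hsubim : γ - b ∈ Φim := by
          rw [him]; exact ⟨hsub, by rw [map_sub, hθγ, hθb]⟩
        have hgr := hgrade (γ - b) hsubim b hbim (by rw [sub_add_cancel]; exact hγΦ)
        rw [sub_add_cancel] at hgr
        have hsubc : γ - b ∈ Φc := by
          by_contra hnc
          exact hγnc (hgr.mpr (iff_of_false hnc hbnc))
        exact hρne _ hsubc (by rw [inner_sub_left, hγρ, hbρ]; ring)
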